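/- Let r > 2 and p ∈ ℝ. There is no bounded, four times continuously differentiable function u : ℝ → ℝ with u(x) > 0 for all x ∈ ℝ satisfying u'''' + p·u'' + |u|^{r−2}·u = 0 at every point of ℝ. (Any such u would make (u'' + p·u)'' = −|u|^{r−2}u < 0 everywhere, forcing the bounded function u'' + p·u to be concave, hence constant, a contradiction.) -/

import Mathlib

/-- Comparison lemma: if `deriv f ≤ c` on `[a,∞)`, then `f x ≤ f a + c (x - a)` there. -/
lemma stmt17_comp {f : ℝ → ℝ} (hf : Differentiable ℝ f) {a c : ℝ}
    (h : ∀ y, a ≤ y → deriv f y ≤ c) : ∀ x, a ≤ x → f x ≤ f a + c * (x - a) := by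
  intro x hx
  set g : ℝ → ℝ := fun y => c * y - f y with hg
  have hg' : ∀ y, HasDerivAt g (c - deriv f y) y := fun y => by
    have h := ((hasDerivAt_id y).const_mul c).sub (hf y).hasDerivAt
    simp at h
    exact h
  have hmono : MonotoneOn g (Set.Ici a) := by
    refine monotoneOn_of_deriv_nonneg (convex_Ici a)
      (Continuous.continuousOn (by rw [hg]; exact (continuous_const.mul continuous_id).sub hf.continuous))
      (fun y _ => (hg' y).differentiableAt.differentiableWithinAt)
      (fun y hy => ?_)
    rw [(hg' y).deriv]
    have hay : a ≤ y := le_of_lt (by simpa using hy)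
    linarith [h y hay]
  have := hmono (Set.self_mem_Ici) (Set.mem_Ici.mpr hx) hx
  simp only [hg] at this
  nlinarith

/-- Key lemma: a positive bounded solution cannot have `u''' + p u' < 0` at `1`. -/
lemma stmt17_key (r p : ℝ) (hr : 2 < r) (u : ℝ → ℝ) (hu : ContDiff ℝ 4 u)
    (M : ℝ) (hM : ∀ x : ℝ, |u x| ≤ M) (hpos : ∀ x : ℝ, 0 < u x)
    (heq : ∀ x : ℝ, iteratedDeriv 4 u x + p * iteratedDeriv 2 u x
      + |u x| ^ (r - 2) * u x = 0)
    (hneg : iteratedDeriv 3 u 1 + p * iteratedDeriv 1 u 1 < 0) : False := by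
  have hd : ∀ m : ℕ, m < 4 → Differentiable ℝ (iteratedDeriv m u) := by
    intro m hm
    exact hu.differentiable_iteratedDeriv m (by exact_mod_cast hm)
  have hd0 := hd 0 (by norm_num)
  have hd1 := hd 1 (by norm_num)
  have hd2 := hd 2 (by norm_num)
  have hd3 := hd 3 (by norm_num)
  rw [iteratedDeriv_zero] at hd0
  set w : ℝ → ℝ := fun x => iteratedDeriv 3 u x + p * iteratedDeriv 1 u x with hw
  have hw' : ∀ x, HasDerivAt w (iteratedDeriv 4 u x + p * iteratedDeriv 2 u x) x := by
    intro x
    have h3 : HasDerivAt (iteratedDeriv 3 u) (iteratedDeriv 4 u x) x := by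
      rw [show iteratedDeriv 4 u = deriv (iteratedDeriv 3 u) from iteratedDeriv_succ]
      exact (hd3 x).hasDerivAt
    have h1 : HasDerivAt (iteratedDeriv 1 u) (iteratedDeriv 2 u x) x := by
      rw [show iteratedDeriv 2 u = deriv (iteratedDeriv 1 u) from iteratedDeriv_succ]
      exact (hd1 x).hasDerivAt
    exact h3.add (h1.const_mul p)
  have hwdiff : Differentiable ℝ w := fun x => (hw' x).differentiableAt
  have hwneg : ∀ x, deriv w x < 0 := by
    intro x
    rw [(hw' x).deriv]
    have hux := hpos x
    have habs : 0 < |u x| ^ (r - 2) := Real.rpow_pos_of_pos (abs_pos.mpr hux.ne') _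
    nlinarith [heq x]
  set v : ℝ → ℝ := fun x => iteratedDeriv 2 u x + p * u x with hv
  have hv' : ∀ x, HasDerivAt v (w x) x := by
    intro x
    have h2 : HasDerivAt (iteratedDeriv 2 u) (iteratedDeriv 3 u x) x := by
      rw [show iteratedDeriv 3 u = deriv (iteratedDeriv 2 u) from iteratedDeriv_succ]
      exact (hd2 x).hasDerivAt
    have h0 : HasDerivAt u (iteratedDeriv 1 u x) x := by
      rw [iteratedDeriv_one]
      exact (hd0 x).hasDerivAt
    exact h2.add (h0.const_mul p)
  have hvdiff : Differentiable ℝ v := fun x => (hv' x).differentiableAt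
  set c : ℝ := w 1 with hc
  have hwle : ∀ x, (1:ℝ) ≤ x → w x ≤ c := by
    intro x hx
    have := stmt17_comp hwdiff (a := 1) (c := 0) (fun y _ => (hwneg y).le) x hx
    simpa [hc] using this
  have hvle : ∀ x, (1:ℝ) ≤ x → v x ≤ v 1 + c * (x - 1) := by
    refine stmt17_comp hvdiff (fun y hy => ?_)
    rw [(hv' y).deriv]; exact hwle y hy
  have hM0 : 0 ≤ M := le_trans (abs_nonneg _) (hM 0)
  set a₂ : ℝ := max 1 (1 + (v 1 + |p| * M + 1) / (-c)) with ha₂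
  have ha₂1 : (1:ℝ) ≤ a₂ := le_max_left _ _
  have hcneg : c < 0 := hneg
  have hd2le : ∀ x, a₂ ≤ x → iteratedDeriv 2 u x ≤ -1 := by
    intro x hx
    have hx1 : (1:ℝ) ≤ x := le_trans ha₂1 hx
    have h1 : v x ≤ v 1 + c * (x - 1) := hvle x hx1
    have h2 : |p * u x| ≤ |p| * M := by
      rw [abs_mul]
      exact mul_le_mul_of_nonneg_left (hM x) (abs_nonneg p)
    have h3 : -(|p| * M) ≤ p * u x := neg_le_of_abs_le h2
    have h4 : 1 + (v 1 + |p| * M + 1) / (-c) ≤ x := le_trans (le_max_right _ _) hx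
    have h5 : v 1 + |p| * M + 1 ≤ (x - 1) * (-c) := by
      have h6 : (v 1 + |p| * M + 1) / (-c) ≤ x - 1 := by linarith
      exact (div_le_iff₀ (show (0:ℝ) < -c by linarith)).mp h6
    have hvx : iteratedDeriv 2 u x = v x - p * u x := by simp [hv]
    rw [hvx]
    nlinarith
  have hd1le : ∀ x, a₂ ≤ x → iteratedDeriv 1 u x ≤ iteratedDeriv 1 u a₂ + (-1) * (x - a₂) := by
    refine stmt17_comp hd1 (fun y hy => ?_)
    rw [show deriv (iteratedDeriv 1 u) = iteratedDeriv 2 u from (iteratedDeriv_succ).symm]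
    exact hd2le y hy
  set a₃ : ℝ := a₂ + |iteratedDeriv 1 u a₂| + 1 with ha₃
  have ha₃2 : a₂ ≤ a₃ := by
    have := abs_nonneg (iteratedDeriv 1 u a₂); linarith
  have hd1le3 : ∀ x, a₃ ≤ x → iteratedDeriv 1 u x ≤ -1 := by
    intro x hx
    have := hd1le x (le_trans ha₃2 hx)
    have h' : iteratedDeriv 1 u a₂ ≤ |iteratedDeriv 1 u a₂| := le_abs_self _
    nlinarith
  have hule : ∀ x, a₃ ≤ x → u x ≤ u a₃ + (-1) * (x - a₃) := by
    refine stmt17_comp hd0 (fun y hy => ?_)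
    rw [show deriv u = iteratedDeriv 1 u from (iteratedDeriv_one).symm]
    exact hd1le3 y hy
  have hfinal := hule (a₃ + u a₃ + 1) (by linarith [hpos a₃])
  have := hpos (a₃ + u a₃ + 1)
  nlinarith

/-- Let `r > 2` and `p ∈ ℝ`. There is no bounded, four times continuously
differentiable `u : ℝ → ℝ` with `u > 0` everywhere satisfying
`u'''' + p u'' + |u|^(r−2) u = 0` on all of `ℝ`. -/
theorem stmt17 (r p : ℝ) (hr : 2 < r) :
    ¬ ∃ u : ℝ → ℝ, ContDiff ℝ 4 u ∧ (∃ M : ℝ, ∀ x : ℝ, |u x| ≤ M) ∧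
      (∀ x : ℝ, 0 < u x) ∧
      ∀ x : ℝ, iteratedDeriv 4 u x + p * iteratedDeriv 2 u x
        + |u x| ^ (r - 2) * u x = 0 := by
  rintro ⟨u, hu, ⟨M, hM⟩, hpos, heq⟩
  -- set up w and prove it is strictly antitone
  have hd : ∀ m : ℕ, m < 4 → Differentiable ℝ (iteratedDeriv m u) := by
    intro m hm
    exact hu.differentiable_iteratedDeriv m (by exact_mod_cast hm)
  have hd1 := hd 1 (by norm_num)
  have hd3 := hd 3 (by norm_num)
  set w : ℝ → ℝ := fun x => iteratedDeriv 3 u x + p * iteratedDeriv 1 u x with hw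
  have hw' : ∀ x, HasDerivAt w (iteratedDeriv 4 u x + p * iteratedDeriv 2 u x) x := by
    intro x
    have h3 : HasDerivAt (iteratedDeriv 3 u) (iteratedDeriv 4 u x) x := by
      rw [show iteratedDeriv 4 u = deriv (iteratedDeriv 3 u) from iteratedDeriv_succ]
      exact (hd3 x).hasDerivAt
    have h1 : HasDerivAt (iteratedDeriv 1 u) (iteratedDeriv 2 u x) x := by
      rw [show iteratedDeriv 2 u = deriv (iteratedDeriv 1 u) from iteratedDeriv_succ]
      exact (hd1 x).hasDerivAt
    exact h3.add (h1.const_mul p)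
  have hwneg : ∀ x, deriv w x < 0 := by
    intro x
    rw [(hw' x).deriv]
    have hux := hpos x
    have habs : 0 < |u x| ^ (r - 2) := Real.rpow_pos_of_pos (abs_pos.mpr hux.ne') _
    nlinarith [heq x]
  have hanti : StrictAnti w := strictAnti_of_deriv_neg hwneg
  by_cases hcase : w 1 < 0
  · exact stmt17_key r p hr u hu M hM hpos heq hcase
  · -- reflect: ũ x = u (-x) is also a solution, with w̃ 1 = -(w (-1)) < 0
    push_neg at hcase
    have hwm1 : 0 < w (-1) := lt_of_le_of_lt hcase (hanti (by norm_num))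
    set v : ℝ → ℝ := fun x => u (-x) with hvdef
    have hvcd : ContDiff ℝ 4 v := hu.comp (contDiff_neg.of_le le_top)
    have hiter : ∀ (n : ℕ) (x : ℝ),
        iteratedDeriv n v x = (-1 : ℝ) ^ n * iteratedDeriv n u (-x) := by
      intro n x
      simpa [smul_eq_mul] using iteratedDeriv_comp_neg n u x
    refine stmt17_key r p hr v hvcd M (fun x => hM (-x)) (fun x => hpos (-x)) ?_ ?_
    · intro x
      have h4 := hiter 4 x
      have h2 := hiter 2 x
      rw [h4, h2]
      simpa [hvdef, show ((-1:ℝ))^4 = 1 by norm_num] using heq (-x)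
    · have h3 := hiter 3 1
      have h1 := hiter 1 1
      rw [h3, h1]
      have : w (-1) = iteratedDeriv 3 u (-1) + p * iteratedDeriv 1 u (-1) := rfl
      nlinarith
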